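/- Let p = (p_1, ..., p_n) and q = (q_1, ..., q_n) be probability distributions with all entries positive, and let ϖ ≥ 0 satisfy ϖ · max_i max(p_i, q_i) < 2. Then for every α with 0 ≤ α ≤ 1, the message importance measure is concave: L(α p + (1 − α) q, ϖ) ≥ α L(p, ϖ) + (1 − α) L(q, ϖ). -/

import Mathlib

/-- Concavity of the message importance measure: if
`ϖ * max_i max (p i) (q i) < 2`, then for all `0 ≤ α ≤ 1`,
`L(α p + (1-α) q, ϖ) ≥ α L(p, ϖ) + (1-α) L(q, ϖ)`. -/
theorem mim_concave {n : ℕ} (hn : 0 < n) (p q : Fin n → ℝ)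
    (hp : ∀ i, 0 < p i) (hq : ∀ i, 0 < q i)
    (hpsum : ∑ i, p i = 1) (hqsum : ∑ i, q i = 1)
    (ϖ : ℝ) (hϖ : 0 ≤ ϖ)
    (hmax : ϖ * (Finset.univ.sup' (Finset.univ_nonempty_iff.mpr
      (Fin.pos_iff_nonempty.mp hn)) (fun i => max (p i) (q i))) < 2)
    (α : ℝ) (hα0 : 0 ≤ α) (hα1 : α ≤ 1) :
    α * Real.log (∑ i, p i * Real.exp (ϖ * (1 - p i))) +
      (1 - α) * Real.log (∑ i, q i * Real.exp (ϖ * (1 - q i))) ≤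
    Real.log (∑ i, (α * p i + (1 - α) * q i) *
      Real.exp (ϖ * (1 - (α * p i + (1 - α) * q i)))) := by
  have hne : (Finset.univ : Finset (Fin n)).Nonempty :=
    Finset.univ_nonempty_iff.mpr (Fin.pos_iff_nonempty.mp hn)
  set M := Finset.univ.sup' (Finset.univ_nonempty_iff.mpr
      (Fin.pos_iff_nonempty.mp hn)) (fun i => max (p i) (q i)) with hMdef
  set f : ℝ → ℝ := fun x => x * Real.exp (ϖ * (1 - x)) with hf
  -- derivative computations
  have hd1 : ∀ x : ℝ, HasDerivAt f (Real.exp (ϖ * (1 - x)) * (1 - ϖ * x)) x := by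
    intro x
    have hg : HasDerivAt (fun y : ℝ => ϖ * (1 - y)) (-ϖ) x := by
      simpa using ((hasDerivAt_const x (1:ℝ)).sub (hasDerivAt_id x)).const_mul ϖ
    have he : HasDerivAt (fun y : ℝ => Real.exp (ϖ * (1 - y)))
        (Real.exp (ϖ * (1 - x)) * (-ϖ)) x := hg.exp
    have := (hasDerivAt_id' (x := x)).mul he
    exact this.congr_deriv (by ring)
  have hderiv : deriv f = fun x => Real.exp (ϖ * (1 - x)) * (1 - ϖ * x) := by
    funext x; exact (hd1 x).deriv
  have hd2 : ∀ x : ℝ, HasDerivAt (deriv f)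
      (Real.exp (ϖ * (1 - x)) * ϖ * (ϖ * x - 2)) x := by
    intro x
    rw [hderiv]
    have hg : HasDerivAt (fun y : ℝ => ϖ * (1 - y)) (-ϖ) x := by
      simpa using ((hasDerivAt_const x (1:ℝ)).sub (hasDerivAt_id x)).const_mul ϖ
    have he : HasDerivAt (fun y : ℝ => Real.exp (ϖ * (1 - y)))
        (Real.exp (ϖ * (1 - x)) * (-ϖ)) x := hg.exp
    have hl : HasDerivAt (fun y : ℝ => 1 - ϖ * y) (-ϖ) x := by
      simpa using ((hasDerivAt_id x).const_mul ϖ).const_sub (1:ℝ)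
    have := he.mul hl
    exact this.congr_deriv (by ring)
  have hconc : ConcaveOn ℝ (Set.Icc (0:ℝ) M) f := by
    apply concaveOn_of_deriv2_nonpos (convex_Icc 0 M)
    · exact fun x _ => ((hd1 x).continuousAt).continuousWithinAt
    · exact fun x _ => ((hd1 x).differentiableAt).differentiableWithinAt
    · exact fun x _ => ((hd2 x).differentiableAt).differentiableWithinAt
    · intro x hx
      rw [interior_Icc] at hx
      have hx2 : ϖ * x ≤ ϖ * M := mul_le_mul_of_nonneg_left hx.2.le hϖ
      have : deriv^[2] f x = Real.exp (ϖ * (1 - x)) * ϖ * (ϖ * x - 2) := by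
        simp only [Function.iterate_succ, Function.iterate_zero, Function.comp,
          Function.id_def]
        exact (hd2 x).deriv
      rw [this]
      have : ϖ * x - 2 ≤ 0 := by linarith
      have hexp := (Real.exp_pos (ϖ * (1 - x))).le
      exact mul_nonpos_of_nonneg_of_nonpos (by positivity) this
  have hle : ∀ i, max (p i) (q i) ≤ M := fun i =>
    Finset.le_sup' (fun i => max (p i) (q i)) (Finset.mem_univ i)
  have hmemp : ∀ i, p i ∈ Set.Icc (0:ℝ) M := fun i =>
    ⟨(hp i).le, le_trans (le_max_left _ _) (hle i)⟩
  have hmemq : ∀ i, q i ∈ Set.Icc (0:ℝ) M := fun i =>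
    ⟨(hq i).le, le_trans (le_max_right _ _) (hle i)⟩
  have hαβ : α + (1 - α) = 1 := by ring
  have hβ0 : (0:ℝ) ≤ 1 - α := by linarith
  -- pointwise concavity
  have hpt : ∀ i, α * f (p i) + (1 - α) * f (q i) ≤ f (α * p i + (1 - α) * q i) := by
    intro i
    have := hconc.2 (hmemp i) (hmemq i) hα0 hβ0 hαβ
    simpa [smul_eq_mul] using this
  set A := ∑ i, p i * Real.exp (ϖ * (1 - p i)) with hA
  set B := ∑ i, q i * Real.exp (ϖ * (1 - q i)) with hB
  set C := ∑ i, (α * p i + (1 - α) * q i) *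
      Real.exp (ϖ * (1 - (α * p i + (1 - α) * q i))) with hC
  have hApos : 0 < A := Finset.sum_pos (fun i _ => mul_pos (hp i) (Real.exp_pos _)) hne
  have hBpos : 0 < B := Finset.sum_pos (fun i _ => mul_pos (hq i) (Real.exp_pos _)) hne
  have hsum : α * A + (1 - α) * B ≤ C := by
    rw [hA, hB, hC, Finset.mul_sum, Finset.mul_sum, ← Finset.sum_add_distrib]
    exact Finset.sum_le_sum fun i _ => hpt i
  have hmixpos : 0 < α * A + (1 - α) * B := by
    rcases lt_or_eq_of_le hα0 with h | h
    · have := mul_pos h hApos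
      nlinarith [mul_nonneg hβ0 hBpos.le]
    · rw [← h]; simpa using hBpos
  calc α * Real.log A + (1 - α) * Real.log B
      ≤ Real.log (α * A + (1 - α) * B) := by
        have := strictConcaveOn_log_Ioi.concaveOn.2 (Set.mem_Ioi.mpr hApos)
          (Set.mem_Ioi.mpr hBpos) hα0 hβ0 hαβ
        simpa [smul_eq_mul] using this
    _ ≤ Real.log C := Real.log_le_log hmixpos hsum
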